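/- For all u > 0: (u-1)·log u ≥ (u-1)²/(1 + (1/2)(u-1)) + (1/12)·(u-1)⁴/(1 + (1/2)(u-1))³. Consequently, the Jeffrey divergence J(P,Q) = ∫(q-p)log(q/p) dμ satisfies J ≥ V² + (1/12)V⁴. -/

import Mathlib

open MeasureTheory


noncomputable def gJ : ℝ → ℝ := fun u =>
  Real.log u - 2*(u-1)/(u+1) - (2/3)*(u-1)^3/(u+1)^3

lemma gJ_hasDerivAt {u : ℝ} (hu : 0 < u) :
    HasDerivAt gJ ((u-1)^4/(u*(u+1)^4)) u := by
  have hne : u + 1 ≠ 0 := by linarith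
  have h1 : HasDerivAt Real.log u⁻¹ u := Real.hasDerivAt_log hu.ne'
  have h2 : HasDerivAt (fun u : ℝ => 2*(u-1)/(u+1))
      ((2*1*(u+1) - 2*(u-1)*1)/(u+1)^2) u :=
    (((hasDerivAt_id u).sub_const 1).const_mul 2).div
      ((hasDerivAt_id u).add_const 1) hne
  have h3 : HasDerivAt (fun u : ℝ => (2/3)*(u-1)^3/(u+1)^3)
      ((((2/3)*(3*(u-1)^2*1))*(u+1)^3 - (2/3)*(u-1)^3*(3*(u+1)^2*1)) / ((u+1)^3)^2) u := by
    exact ((((hasDerivAt_id u).sub_const 1).pow 3).const_mul (2/3)).div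
      (((hasDerivAt_id u).add_const 1).pow 3) (pow_ne_zero 3 hne)
  have := (h1.sub h2).sub h3
  refine HasDerivAt.congr_deriv (f := gJ) this ?_
  field_simp
  ring

lemma gJ_key : ∀ u : ℝ, 0 < u → 0 ≤ (u - 1) * gJ u := by
  have hmono : MonotoneOn gJ (Set.Ioi (0:ℝ)) := by
    apply monotoneOn_of_deriv_nonneg (convex_Ioi 0)
    · exact fun x hx => ((gJ_hasDerivAt hx).differentiableAt.continuousAt.continuousWithinAt)
    · rw [interior_Ioi]
      exact fun x hx => (gJ_hasDerivAt hx).differentiableAt.differentiableWithinAt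
    · rw [interior_Ioi]
      intro x hx
      rw [(gJ_hasDerivAt hx).deriv]
      have : (0:ℝ) < x := hx
      positivity
  have hg1 : gJ 1 = 0 := by simp [gJ]
  intro u hu
  rcases le_total 1 u with h | h
  · have := hmono (Set.mem_Ioi.2 one_pos) (Set.mem_Ioi.2 hu) h
    rw [hg1] at this
    have : 0 ≤ gJ u := this
    nlinarith
  · have := hmono (Set.mem_Ioi.2 hu) (Set.mem_Ioi.2 one_pos) h
    rw [hg1] at this
    nlinarith

lemma part1 : ∀ u : ℝ, 0 < u →
      (u - 1) * Real.log u ≥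
        (u - 1) ^ 2 / (1 + (1 / 2) * (u - 1)) +
        (1 / 12) * (u - 1) ^ 4 / (1 + (1 / 2) * (u - 1)) ^ 3 := by
  intro u hu
  have hkey := gJ_key u hu
  have hne : u + 1 ≠ 0 := by linarith
  have hd : 1 + (1/2)*(u-1) = (u+1)/2 := by ring
  rw [ge_iff_le, ← sub_nonneg]
  have : (u - 1) * Real.log u -
      ((u - 1) ^ 2 / (1 + (1 / 2) * (u - 1)) +
        (1 / 12) * (u - 1) ^ 4 / (1 + (1 / 2) * (u - 1)) ^ 3) = (u-1) * gJ u := by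
    rw [hd]
    unfold gJ
    field_simp
    ring
  rw [this]
  exact hkey


theorem part2 (Ω : Type) (_ : MeasurableSpace Ω) (μ : Measure Ω) (p q : Ω → ℝ)
      (hpm : Measurable p) (hqm : Measurable q)
      (hp : ∀ x, 0 < p x) (hq : ∀ x, 0 < q x)
      (hip : (∫ x, p x ∂μ) = 1) (hiq : (∫ x, q x ∂μ) = 1)
      (hA : Integrable (fun x => |q x - p x|) μ)
      (hJ : Integrable (fun x => (q x - p x) * Real.log (q x / p x)) μ) :
      (∫ x, (q x - p x) * Real.log (q x / p x) ∂μ) ≥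
        (∫ x, |q x - p x| ∂μ) ^ 2 + (1 / 12) * (∫ x, |q x - p x| ∂μ) ^ 4 := by
  -- integrability of p and q
  have hpInt : Integrable p μ := by
    by_contra h; rw [integral_undef h] at hip; norm_num at hip
  have hqInt : Integrable q μ := by
    by_contra h; rw [integral_undef h] at hiq; norm_num at hiq
  set B : Ω → ℝ := fun x => (p x + q x) / 2 with hB
  have hBpos : ∀ x, 0 < B x := fun x => by
    have := hp x; have := hq x; simp only [hB]; positivity
  have hBInt : Integrable B μ := (hpInt.add hqInt).div_const 2
  have hBval : (∫ x, B x ∂μ) = 1 := by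
    simp only [hB]
    rw [integral_div, integral_add hpInt hqInt, hip, hiq]
    norm_num
  set f1 : Ω → ℝ := fun x => (q x - p x)^2 / B x with hf1def
  set f2 : Ω → ℝ := fun x => (q x - p x)^4 / (B x)^3 with hf2def
  -- pointwise key inequality
  have key : ∀ x, f1 x + (1/12) * f2 x ≤ (q x - p x) * Real.log (q x / p x) := by
    intro x
    have hpx := hp x
    have hqx := hq x
    have h1 := part1 (q x / p x) (div_pos hqx hpx)
    rw [ge_iff_le] at h1
    have h1' := mul_le_mul_of_nonneg_left h1 hpx.le
    have eL : p x * ((q x / p x - 1) * Real.log (q x / p x))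
        = (q x - p x) * Real.log (q x / p x) := by
      field_simp
    have hd : 1 + (1/2) * (q x / p x - 1) = (p x + q x) / (2 * p x) := by
      field_simp; ring
    have eR : p x * ((q x / p x - 1) ^ 2 / (1 + (1/2) * (q x / p x - 1)) +
        (1/12) * (q x / p x - 1) ^ 4 / (1 + (1/2) * (q x / p x - 1)) ^ 3)
        = f1 x + (1/12) * f2 x := by
      rw [hd]
      simp only [hf1def, hf2def, hB]
      have hpq : p x + q x ≠ 0 := by positivity
      field_simp
    rw [eL, eR] at h1'
    exact h1'
  -- nonnegativity and integrability of f1, f2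
  have hf1nn : ∀ x, 0 ≤ f1 x := fun x => div_nonneg (by positivity) (hBpos x).le
  have hf2nn : ∀ x, 0 ≤ f2 x := fun x =>
    div_nonneg (by positivity) (pow_nonneg (hBpos x).le 3)
  have hf1m : Measurable f1 := ((hqm.sub hpm).pow_const 2).div ((hpm.add hqm).div_const 2)
  have hf2m : Measurable f2 := ((hqm.sub hpm).pow_const 4).div (((hpm.add hqm).div_const 2).pow_const 3)
  have hle : ∀ x, f1 x ≤ (q x - p x) * Real.log (q x / p x) ∧
      f2 x ≤ 12 * ((q x - p x) * Real.log (q x / p x)) := by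
    intro x
    have := key x
    constructor <;> nlinarith [hf1nn x, hf2nn x]
  have hf1Int : Integrable f1 μ := by
    refine hJ.mono hf1m.aestronglyMeasurable (ae_of_all _ fun x => ?_)
    rw [Real.norm_eq_abs, Real.norm_eq_abs, abs_of_nonneg (hf1nn x)]
    exact le_trans (hle x).1 (le_abs_self _)
  have hf2Int : Integrable f2 μ := by
    refine (hJ.const_mul 12).mono hf2m.aestronglyMeasurable (ae_of_all _ fun x => ?_)
    rw [Real.norm_eq_abs, Real.norm_eq_abs, abs_of_nonneg (hf2nn x)]
    exact le_trans (hle x).2 (le_abs_self _)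
  set M := ∫ x, |q x - p x| ∂μ with hM
  have hMnn : 0 ≤ M := integral_nonneg fun x => abs_nonneg _
  set S := ∫ x, f1 x ∂μ with hS
  set T := ∫ x, f2 x ∂μ with hT
  -- step: J ≥ S + T/12
  have step1 : S + (1/12) * T ≤ ∫ x, (q x - p x) * Real.log (q x / p x) ∂μ := by
    have hIeq : ∫ x, (f1 x + (1/12) * f2 x) ∂μ = S + (1/12) * T := by
      rw [integral_add, integral_const_mul]
      · exact hf1Int
      · exact hf2Int.const_mul (1/12)
    have h := integral_mono (f := fun x => f1 x + (1/12) * f2 x)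
      (g := fun x => (q x - p x) * Real.log (q x / p x))
      (hf1Int.add (hf2Int.const_mul (1/12))) hJ key
    rwa [hIeq] at h
  -- Cauchy-Schwarz 1 : M^2 ≤ S
  have cs1 : M ^ 2 ≤ S := by
    have hnn : ∀ x, 0 ≤ f1 x - 2 * M * |q x - p x| + M^2 * B x := by
      intro x
      have hb := hBpos x
      have : f1 x - 2 * M * |q x - p x| + M^2 * B x
          = (|q x - p x| - M * B x)^2 / B x := by
        simp only [hf1def]
        rw [show (q x - p x)^2 = |q x - p x|^2 from (sq_abs _).symm]
        generalize |q x - p x| = a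
        field_simp
        ring
      rw [this]
      positivity
    have h0 : 0 ≤ ∫ x, (f1 x - 2 * M * |q x - p x| + M^2 * B x) ∂μ :=
      integral_nonneg hnn
    have hIeq : ∫ x, (f1 x - 2 * M * |q x - p x| + M^2 * B x) ∂μ
        = S - 2 * M * M + M^2 * 1 := by
      rw [integral_add, integral_sub, integral_const_mul, integral_const_mul, hBval,
        ← hM, ← hS]
      · exact hf1Int
      · exact hA.const_mul (2*M)
      · exact hf1Int.sub (hA.const_mul (2*M))
      · exact hBInt.const_mul (M^2)
    rw [hIeq] at h0
    nlinarith
  -- Cauchy-Schwarz 2 : S^2 ≤ T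
  have cs2 : S ^ 2 ≤ T := by
    have hnn : ∀ x, 0 ≤ f2 x - 2 * S * f1 x + S^2 * B x := by
      intro x
      have hb := hBpos x
      have : f2 x - 2 * S * f1 x + S^2 * B x
          = ((q x - p x)^2 - S * (B x)^2)^2 / (B x)^3 := by
        simp only [hf2def, hf1def]
        field_simp
        ring
      rw [this]
      positivity
    have h0 : 0 ≤ ∫ x, (f2 x - 2 * S * f1 x + S^2 * B x) ∂μ :=
      integral_nonneg hnn
    have hIeq : ∫ x, (f2 x - 2 * S * f1 x + S^2 * B x) ∂μ
        = T - 2 * S * S + S^2 * 1 := by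
      rw [integral_add, integral_sub, integral_const_mul, integral_const_mul, hBval,
        ← hS, ← hT]
      · exact hf2Int
      · exact hf1Int.const_mul (2*S)
      · exact hf2Int.sub (hf1Int.const_mul (2*S))
      · exact hBInt.const_mul (S^2)
    rw [hIeq] at h0
    nlinarith
  have hSnn : 0 ≤ S := integral_nonneg hf1nn
  calc M ^ 2 + (1/12) * M ^ 4 ≤ S + (1/12) * T := by nlinarith
    _ ≤ _ := step1

theorem stmt_16 :
    (∀ u : ℝ, 0 < u →
      (u - 1) * Real.log u ≥
        (u - 1) ^ 2 / (1 + (1 / 2) * (u - 1)) +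
        (1 / 12) * (u - 1) ^ 4 / (1 + (1 / 2) * (u - 1)) ^ 3) ∧
    (∀ (Ω : Type) (_ : MeasurableSpace Ω) (μ : Measure Ω) (p q : Ω → ℝ),
      Measurable p → Measurable q →
      (∀ x, 0 < p x) → (∀ x, 0 < q x) →
      (∫ x, p x ∂μ) = 1 → (∫ x, q x ∂μ) = 1 →
      Integrable (fun x => |q x - p x|) μ →
      Integrable (fun x => (q x - p x) * Real.log (q x / p x)) μ →
      (∫ x, (q x - p x) * Real.log (q x / p x) ∂μ) ≥
        (∫ x, |q x - p x| ∂μ) ^ 2 + (1 / 12) * (∫ x, |q x - p x| ∂μ) ^ 4) :=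
  ⟨part1, part2⟩
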